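/- Let p be a prime with 3 | (p-1), x_1, x_2, x_3 ∈ F_p distinct, and let c^{p-1}_j be the coefficient of t^{p-1} in Π_{s=1}^3 (t-x_s)^{2(p-1)/3}/(t-x_j) ∈ F_p[t]. Let N(t) = #{y ∈ F_p : y³ = (t-x_1)(t-x_2)(t-x_3)}. Then Σ_{t ∈ F_p, t ≠ x_j} N(t)/(t-x_j) = -c^{p-1}_j in F_p, for j = 1, 2, 3. -/

import Mathlib

open Finset Polynomial

open Finset Polynomial

lemma sum_pow_zmod (p : ℕ) [Fact p.Prime] (k : ℕ) (hk : k ≠ 0) :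
    ∑ x : ZMod p, x ^ k = if (p - 1) ∣ k then -1 else 0 := by
  classical
  have h0 : ∑ x : ZMod p, x ^ k
      = ∑ x ∈ (univ : Finset (ZMod p)).erase 0, x ^ k := by
    rw [Finset.sum_erase _ (by simp [zero_pow hk])]
  let φ : (ZMod p)ˣ ↪ ZMod p := ⟨fun x => (x : ZMod p), fun _ _ h => Units.ext h⟩
  have hmap : (univ : Finset (ZMod p)ˣ).map φ = (univ : Finset (ZMod p)).erase 0 := by
    ext y
    simp only [mem_map, mem_univ, true_and, mem_erase, and_true, φ,
      Function.Embedding.coeFn_mk]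
    constructor
    · rintro ⟨u, rfl⟩; exact u.ne_zero
    · intro hy; exact ⟨Units.mk0 y hy, rfl⟩
  have := FiniteField.sum_pow_units (ZMod p) k
  rw [ZMod.card] at this
  rw [h0, ← hmap, Finset.sum_map, ← this]
  simp [φ]
  rfl

lemma sum_pow_zmod' (p : ℕ) [Fact p.Prime] (k : ℕ) (hk0 : k ≠ 0) (hk1 : k ≠ p - 1)
    (hk2 : k < 2 * (p - 1)) : ∑ x : ZMod p, x ^ k = 0 := by
  have hp2 : 2 ≤ p := (Fact.out : p.Prime).two_le
  rw [sum_pow_zmod p k hk0, if_neg]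
  rintro ⟨c, rfl⟩
  have hc2 : c < 2 := by
    refine Nat.lt_of_mul_lt_mul_left (a := p - 1) ?_
    omega
  interval_cases c <;> simp_all


lemma exists_cube_root (p : ℕ) [Fact p.Prime] (hp3 : 3 ∣ (p - 1)) (a : ZMod p)
    (ha : a ≠ 0) (h1 : a ^ ((p - 1) / 3) = 1) : ∃ y : ZMod p, y ^ 3 = a := by
  set m := (p - 1) / 3 with hmdef
  have hm : m * 3 = p - 1 := Nat.div_mul_cancel hp3
  have hp2 : 2 ≤ p := (Fact.out : p.Prime).two_le
  have hm0 : m ≠ 0 := by omega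
  obtain ⟨g, hg⟩ := IsCyclic.exists_generator (α := (ZMod p)ˣ)
  lift a to (ZMod p)ˣ using isUnit_iff_ne_zero.mpr ha with u hu
  have h1' : u ^ m = 1 := by
    ext
    push_cast
    exact h1
  obtain ⟨k, hk0⟩ := mem_powers_iff_mem_zpowers.mpr (hg u)
  have hk : g ^ k = u := hk0
  have horder : orderOf g = p - 1 := by
    rw [orderOf_eq_card_of_forall_mem_zpowers hg, Nat.card_eq_fintype_card, ZMod.card_units]
  have hgkm : g ^ (k * m) = 1 := by rw [pow_mul, hk, h1']
  have hdvd : (p - 1) ∣ k * m := by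
    rw [← horder]; exact orderOf_dvd_of_pow_eq_one hgkm
  have h3k : 3 ∣ k := by
    obtain ⟨c, hc⟩ := hdvd
    have h : m * k = m * (3 * c) := by
      rw [mul_comm m k, hc, ← hm]; ring
    exact ⟨c, Nat.eq_of_mul_eq_mul_left (Nat.pos_of_ne_zero hm0) h⟩
  obtain ⟨l, rfl⟩ := h3k
  refine ⟨((g ^ l : (ZMod p)ˣ) : ZMod p), ?_⟩
  rw [← Units.val_pow_eq_pow_val, ← pow_mul, mul_comm l 3, hk]

lemma exists_prim3 (p : ℕ) [Fact p.Prime] (hp3 : 3 ∣ (p - 1)) :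
    ∃ ζ : ZMod p, IsPrimitiveRoot ζ 3 := by
  haveI : Fact (Nat.Prime 3) := ⟨Nat.prime_three⟩
  obtain ⟨ζ, hζ⟩ := exists_prime_orderOf_dvd_card (G := (ZMod p)ˣ) 3
    (by rw [ZMod.card_units]; exact hp3)
  exact ⟨(ζ : ZMod p), IsPrimitiveRoot.coe_units_iff.mpr (hζ ▸ IsPrimitiveRoot.orderOf ζ)⟩

lemma card_cube (p : ℕ) [Fact p.Prime] (hp3 : 3 ∣ (p - 1)) (a : ZMod p) :
    (((univ.filter (fun y : ZMod p => y ^ 3 = a)).card : ℕ) : ZMod p)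
      = 1 + a ^ ((p - 1) / 3) + (a ^ ((p - 1) / 3)) ^ 2 := by
  classical
  set m := (p - 1) / 3 with hmdef
  have hm : m * 3 = p - 1 := Nat.div_mul_cancel hp3
  have hp2 : 2 ≤ p := (Fact.out : p.Prime).two_le
  have hm0 : m ≠ 0 := by omega
  by_cases ha : a = 0
  · subst ha
    have hset : (univ.filter (fun y : ZMod p => y ^ 3 = 0)) = {0} := by
      ext y; simp [pow_eq_zero_iff (by norm_num : (3:ℕ) ≠ 0)]
    rw [hset]
    simp [zero_pow hm0]
  · obtain ⟨ζ, hζ⟩ := exists_prim3 p hp3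
    have hcard : (univ.filter (fun y : ZMod p => y ^ 3 = a)).card
        = Multiset.card (nthRoots 3 a) := by
      have hnodup := hζ.nthRoots_nodup ha
      rw [← Multiset.toFinset_card_of_nodup hnodup]
      congr 1
      ext y
      simp [Multiset.mem_toFinset, mem_nthRoots (by norm_num : 0 < 3)]
    rw [hcard, hζ.card_nthRoots a]
    have hb3 : (a ^ m) ^ 3 = 1 := by
      rw [← pow_mul, hm, ZMod.pow_card_sub_one_eq_one ha]
    by_cases hb : a ^ m = 1
    · rw [if_pos (exists_cube_root p hp3 a ha hb), hb]
      norm_num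
    · rw [if_neg ?_]
      · have hz : (a ^ m - 1) * ((a ^ m) ^ 2 + a ^ m + 1) = 0 := by
          linear_combination hb3
        have h2 := (mul_eq_zero.mp hz).resolve_left (sub_ne_zero.mpr hb)
        push_cast
        linear_combination -h2
      · rintro ⟨y, hy⟩
        have hy0 : y ≠ 0 := by rintro rfl; exact ha (by simpa using hy.symm)
        apply hb
        rw [← hy, ← pow_mul, mul_comm 3 m, hm, ZMod.pow_card_sub_one_eq_one hy0]

lemma sum_eval_zmod (p : ℕ) [Fact p.Prime] (P : Polynomial (ZMod p))
    (hdeg : P.natDegree < 2 * (p - 1)) :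
    ∑ t : ZMod p, P.eval t = -(P.coeff (p - 1)) := by
  classical
  have hp2 : 2 ≤ p := (Fact.out : p.Prime).two_le
  have hstep : ∑ t : ZMod p, P.eval t
      = ∑ i ∈ range (P.natDegree + 1), P.coeff i * ∑ t : ZMod p, t ^ i := by
    simp_rw [fun t : ZMod p => P.eval_eq_sum_range (x := t)]
    rw [Finset.sum_comm]
    simp_rw [Finset.mul_sum]
  rw [hstep]
  have hsum : ∑ t : ZMod p, (t : ZMod p) ^ (p - 1) = -1 := by
    rw [sum_pow_zmod p (p - 1) (by omega), if_pos dvd_rfl]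
  rw [Finset.sum_eq_single (p - 1)]
  · rw [hsum, mul_neg_one, neg_inj]  -- ?
  · intro i hi hne
    rcases Nat.eq_zero_or_pos i with rfl | hpos
    · have : ∑ t : ZMod p, (t : ZMod p) ^ 0 = 0 := by
        simp [Finset.card_univ, ZMod.card, ZMod.natCast_self]
      rw [this, mul_zero]
    · rw [sum_pow_zmod' p i (by omega) hne (by
        have := Finset.mem_range.mp hi; omega), mul_zero]
  · intro hmem
    rw [coeff_eq_zero_of_natDegree_lt, zero_mul]
    have := Finset.mem_range.not.mp hmem
    omega

lemma prod_shift_aux {K : Type*} [CommRing K] (x : Fin 3 → K) (j : Fin 3) (n : ℕ)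
    (hn : n ≠ 0) :
    (X - C (x j)) * ∏ s, (X - C (x s)) ^ (if s = j then n - 1 else n)
      = (∏ s, (X - C (x s))) ^ n := by
  rw [← Finset.prod_pow, ← Finset.mul_prod_erase univ _ (mem_univ j),
    ← Finset.mul_prod_erase univ (fun s => (X - C (x s)) ^ n) (mem_univ j),
    if_pos rfl, ← mul_assoc, ← pow_succ']
  congr 1
  · congr 1
    omega
  · exact Finset.prod_congr rfl fun s hs => by rw [if_neg (Finset.mem_erase.mp hs).1]

theorem cubic_curve_integral_eq_neg_coeff (p : ℕ) [Fact p.Prime]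
    (hp3 : 3 ∣ (p - 1)) (x : Fin 3 → ZMod p) (hx : Function.Injective x)
    (j : Fin 3) (c : ZMod p)
    (hc : c = Polynomial.coeff
      (∏ s, (Polynomial.X - Polynomial.C (x s)) ^
        (if s = j then 2 * (p - 1) / 3 - 1 else 2 * (p - 1) / 3)) (p - 1))
    (N : ZMod p → ℕ)
    (hN : ∀ t, N t = (univ.filter (fun y : ZMod p => y ^ 3 = ∏ s, (t - x s))).card) :
    ∑ t ∈ univ.filter (fun t : ZMod p => t ≠ x j), (N t : ZMod p) * (t - x j)⁻¹
      = -c := by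
  classical
  have hp2 : 2 ≤ p := (Fact.out : p.Prime).two_le
  set m := (p - 1) / 3 with hmdef
  have hm : m * 3 = p - 1 := Nat.div_mul_cancel hp3
  have hp4 : p ≠ 4 := by
    intro h
    have hpr : Nat.Prime p := Fact.out
    rw [h] at hpr
    norm_num at hpr
  have hm2 : 2 ≤ m := by omega
  have he2 : 2 * (p - 1) / 3 = 2 * m := by omega
  rw [he2] at hc
  set G : Polynomial (ZMod p) :=
    ∏ s, (X - C (x s)) ^ (if s = j then 2 * m - 1 else 2 * m) with hGdef
  set H : Polynomial (ZMod p) :=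
    ∏ s, (X - C (x s)) ^ (if s = j then m - 1 else m) with hHdef
  -- polynomial identities
  have hGmul : (X - C (x j)) * G = (∏ s, (X - C (x s))) ^ (2 * m) :=
    prod_shift_aux x j (2 * m) (by omega)
  have hHmul : (X - C (x j)) * H = (∏ s, (X - C (x s))) ^ m :=
    prod_shift_aux x j m (by omega)
  -- degree bounds
  have hdegaux : ∀ e : Fin 3 → ℕ,
      (∏ s, (X - C (x s)) ^ e s).natDegree ≤ ∑ s, e s := by
    intro e
    refine le_trans (Polynomial.natDegree_prod_le _ _) (Finset.sum_le_sum fun s _ => ?_)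
    calc ((X - C (x s)) ^ e s).natDegree ≤ e s * (X - C (x s)).natDegree :=
          natDegree_pow_le
      _ ≤ e s := by rw [natDegree_X_sub_C]; omega
  have hsumG : ∑ s : Fin 3, (if s = j then 2 * m - 1 else 2 * m) = 6 * m - 1 := by
    rw [Fin.sum_univ_three]
    fin_cases j <;> simp <;> omega
  have hsumH : ∑ s : Fin 3, (if s = j then m - 1 else m) = 3 * m - 1 := by
    rw [Fin.sum_univ_three]
    fin_cases j <;> simp <;> omega
  have hdegG' : G.natDegree ≤ 6 * m - 1 := by
    have h := hdegaux (fun s => if s = j then 2 * m - 1 else 2 * m)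
    rw [hsumG] at h
    exact h
  have hdegH' : H.natDegree ≤ 3 * m - 1 := by
    have h := hdegaux (fun s => if s = j then m - 1 else m)
    rw [hsumH] at h
    exact h
  have hdegG : G.natDegree < 2 * (p - 1) := by omega
  have hdegH : H.natDegree < 2 * (p - 1) := by omega
  have hcoeffH : H.coeff (p - 1) = 0 := by
    apply coeff_eq_zero_of_natDegree_lt
    omega
  -- eval facts
  have hGzero : G.eval (x j) = 0 := by
    rw [hGdef, eval_prod]
    refine Finset.prod_eq_zero (mem_univ j) ?_
    rw [if_pos rfl, eval_pow, eval_sub, eval_X, eval_C, sub_self,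
      zero_pow (by omega : 2 * m - 1 ≠ 0)]
  have hHzero : H.eval (x j) = 0 := by
    rw [hHdef, eval_prod]
    refine Finset.prod_eq_zero (mem_univ j) ?_
    rw [if_pos rfl, eval_pow, eval_sub, eval_X, eval_C, sub_self,
      zero_pow (by omega : m - 1 ≠ 0)]
  have hGeval : ∀ t : ZMod p, t ≠ x j →
      G.eval t = ((∏ s, (t - x s)) ^ m) ^ 2 * (t - x j)⁻¹ := by
    intro t ht
    have hxt : t - x j ≠ 0 := sub_ne_zero.mpr ht
    have := congrArg (Polynomial.eval t) hGmul
    simp only [eval_mul, eval_sub, eval_X, eval_C, eval_pow, eval_prod] at this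
    rw [eq_mul_inv_iff_mul_eq₀ hxt, ← pow_mul, mul_comm m 2, mul_comm]
    exact this
  have hHeval : ∀ t : ZMod p, t ≠ x j →
      H.eval t = (∏ s, (t - x s)) ^ m * (t - x j)⁻¹ := by
    intro t ht
    have hxt : t - x j ≠ 0 := sub_ne_zero.mpr ht
    have := congrArg (Polynomial.eval t) hHmul
    simp only [eval_mul, eval_sub, eval_X, eval_C, eval_pow, eval_prod] at this
    rw [eq_mul_inv_iff_mul_eq₀ hxt, mul_comm]
    exact this
  -- rewrite the sum
  have hfilter : univ.filter (fun t : ZMod p => t ≠ x j)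
      = (univ : Finset (ZMod p)).erase (x j) := Finset.filter_ne' _ _
  rw [hfilter]
  have hterm : ∀ t ∈ (univ : Finset (ZMod p)).erase (x j),
      (N t : ZMod p) * (t - x j)⁻¹ = (t - x j)⁻¹ + H.eval t + G.eval t := by
    intro t ht
    have ht' : t ≠ x j := (Finset.mem_erase.mp ht).1
    rw [hN t, card_cube p hp3, ← hmdef, hGeval t ht', hHeval t ht']
    ring
  rw [Finset.sum_congr rfl hterm]
  rw [Finset.sum_add_distrib, Finset.sum_add_distrib]
  have hinvsum : ∑ t ∈ (univ : Finset (ZMod p)).erase (x j), (t - x j)⁻¹ = 0 := by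
    have hpt : ∀ t ∈ (univ : Finset (ZMod p)).erase (x j),
        (t - x j)⁻¹ = (t - x j) ^ (p - 2) := by
      intro t ht
      have hxt : t - x j ≠ 0 := sub_ne_zero.mpr (Finset.mem_erase.mp ht).1
      refine inv_eq_of_mul_eq_one_right ?_
      rw [← pow_succ']
      rw [show p - 2 + 1 = p - 1 by omega, ZMod.pow_card_sub_one_eq_one hxt]
    rw [Finset.sum_congr rfl hpt,
      Finset.sum_erase _ (by rw [sub_self, zero_pow (by omega : p - 2 ≠ 0)])]
    have := Fintype.sum_equiv (Equiv.subRight (x j))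
      (fun t : ZMod p => (t - x j) ^ (p - 2)) (fun u : ZMod p => u ^ (p - 2))
      (fun t => rfl)
    rw [this, sum_pow_zmod' p (p - 2) (by omega) (by omega) (by omega)]
  have hHsum : ∑ t ∈ (univ : Finset (ZMod p)).erase (x j), H.eval t = 0 := by
    have h1 : ∑ t ∈ (univ : Finset (ZMod p)).erase (x j), H.eval t
        = ∑ t : ZMod p, H.eval t := Finset.sum_erase _ hHzero
    rw [h1, sum_eval_zmod p H hdegH, hcoeffH, neg_zero]
  have hGsum : ∑ t ∈ (univ : Finset (ZMod p)).erase (x j), G.eval t = -c := by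
    have h1 : ∑ t ∈ (univ : Finset (ZMod p)).erase (x j), G.eval t
        = ∑ t : ZMod p, G.eval t := Finset.sum_erase _ hGzero
    rw [h1, sum_eval_zmod p G hdegG, hc]
  rw [hinvsum, hHsum, hGsum, zero_add, zero_add]
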